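/- Let G be a 2-connected graph, let x, y be vertices of G such that G − {x,y} has at least 3 connected components, and suppose {x,y} is not an admissible 2-cut. Then G is isomorphic to K_{2,3}. -/

import Mathlib

open SimpleGraph

/-- `G` is a 2-sum of `G₁` and `G₂` with joins `j₁, j₂`.  Here `zᵢ` is a vertex of
`Gᵢ` of degree two with distinct neighbors `xᵢ, yᵢ`; the graphs `Gᵢ - zᵢ` (with the
edge `xᵢyᵢ` removed if present) are glued into `G` along `x₁ = x₂ = j₁` and
`y₁ = y₂ = j₂`, and the edge `j₁j₂` is present in `G` iff `xᵢyᵢ ∈ E(Gᵢ)` for some `i`. -/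
def IsTwoSumOf {V V₁ V₂ : Type*} (G : SimpleGraph V) (G₁ : SimpleGraph V₁)
    (G₂ : SimpleGraph V₂) (j₁ j₂ : V) : Prop :=
  ∃ (z₁ x₁ y₁ : V₁) (z₂ x₂ y₂ : V₂) (f₁ : V₁ → V) (f₂ : V₂ → V),
    x₁ ≠ y₁ ∧ x₂ ≠ y₂ ∧
    (∀ u, G₁.Adj z₁ u ↔ u = x₁ ∨ u = y₁) ∧
    (∀ u, G₂.Adj z₂ u ↔ u = x₂ ∨ u = y₂) ∧
    Set.InjOn f₁ {v | v ≠ z₁} ∧ Set.InjOn f₂ {v | v ≠ z₂} ∧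
    f₁ x₁ = j₁ ∧ f₁ y₁ = j₂ ∧ f₂ x₂ = j₁ ∧ f₂ y₂ = j₂ ∧
    (∀ v : V, v ∈ f₁ '' {u | u ≠ z₁} ∪ f₂ '' {u | u ≠ z₂}) ∧
    (f₁ '' {u | u ≠ z₁}) ∩ (f₂ '' {u | u ≠ z₂}) = {j₁, j₂} ∧
    (∀ u v, u ≠ z₁ → v ≠ z₁ → s(u, v) ≠ s(x₁, y₁) →
      (G.Adj (f₁ u) (f₁ v) ↔ G₁.Adj u v)) ∧
    (∀ u v, u ≠ z₂ → v ≠ z₂ → s(u, v) ≠ s(x₂, y₂) →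
      (G.Adj (f₂ u) (f₂ v) ↔ G₂.Adj u v)) ∧
    (G.Adj j₁ j₂ ↔ (G₁.Adj x₁ y₁ ∨ G₂.Adj x₂ y₂)) ∧
    (∀ a b, G.Adj a b →
      (a ∈ f₁ '' {u | u ≠ z₁} ∧ b ∈ f₁ '' {u | u ≠ z₁}) ∨
      (a ∈ f₂ '' {u | u ≠ z₂} ∧ b ∈ f₂ '' {u | u ≠ z₂}))

/-- `{x, y}` is an admissible 2-cut of `G`: `G` can be expressed as a 2-sum of two
graphs, each having fewer edges than `G`, with `{x, y}` the set of joins. -/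
def AdmissibleTwoCut {V : Type*} (G : SimpleGraph V) (x y : V) : Prop :=
  ∃ (n₁ n₂ : ℕ) (G₁ : SimpleGraph (Fin n₁)) (G₂ : SimpleGraph (Fin n₂)),
    IsTwoSumOf G G₁ G₂ x y ∧
    G₁.edgeSet.ncard < G.edgeSet.ncard ∧ G₂.edgeSet.ncard < G.edgeSet.ncard

/-- `G` is 2-connected: at least 3 vertices, and deleting any single vertex
leaves a connected graph. -/
def TwoConnected {V : Type*} [Fintype V] (G : SimpleGraph V) : Prop :=
  3 ≤ Fintype.card V ∧ ∀ v : V, (G.induce {u | u ≠ v}).Connected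

private def sideGraph {V : Type} (G : SimpleGraph V) (x y : V) (T : Set V) (e : Prop) :
    SimpleGraph (Option ↥T) where
  Adj a b := match a, b with
    | none, none => False
    | none, some v => v.1 = x ∨ v.1 = y
    | some v, none => v.1 = x ∨ v.1 = y
    | some u, some v =>
        (G.Adj u.1 v.1 ∧ s(u.1, v.1) ≠ s(x, y)) ∨ (e ∧ u.1 ≠ v.1 ∧ s(u.1, v.1) = s(x, y))
  symm := by
    constructor
    rintro (_|u) (_|v) h
    · exact h
    · exact h
    · exact h
    · rcases h with ⟨h1, h2⟩ | ⟨h1, h2, h3⟩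
      · exact Or.inl ⟨h1.symm, by rwa [Sym2.eq_swap]⟩
      · exact Or.inr ⟨h1, Ne.symm h2, by rwa [Sym2.eq_swap]⟩
  loopless := by
    constructor
    rintro (_|u) h
    · exact h
    · rcases h with ⟨h1, _⟩ | ⟨_, h2, _⟩
      · exact G.loopless.irrefl _ h1
      · exact h2 rfl

private lemma sideGraph_adj_some {V : Type} (G : SimpleGraph V) (x y : V) (T : Set V)
    (e : Prop) (u v : ↥T) :
    (sideGraph G x y T e).Adj (some u) (some v) ↔
      (G.Adj u.1 v.1 ∧ s(u.1, v.1) ≠ s(x, y)) ∨ (e ∧ u.1 ≠ v.1 ∧ s(u.1, v.1) = s(x, y)) :=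
  Iff.rfl

private lemma sideGraph_adj_none {V : Type} (G : SimpleGraph V) (x y : V) (T : Set V)
    (e : Prop) (v : ↥T) :
    (sideGraph G x y T e).Adj none (some v) ↔ (v.1 = x ∨ v.1 = y) := Iff.rfl

private lemma three_le_ncard {α : Type} (a b c : α) (hab : a ≠ b) (hac : a ≠ c)
    (hbc : b ≠ c) : 3 ≤ ({a, b, c} : Set α).ncard := by
  rw [Set.ncard_insert_of_notMem (by simp [hab, hac]) (Set.toFinite _), Set.ncard_pair hbc]

private lemma ncard_lt_of_witness {V : Type} [Fintype V] (G : SimpleGraph V)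
    (E' F : Set (Sym2 V)) (hE' : E' ⊆ G.edgeSet) (hF : F ⊆ G.edgeSet)
    (hdisj : ∀ ed ∈ F, ed ∉ E') (hFc : 3 ≤ F.ncard) :
    E'.ncard + 2 < G.edgeSet.ncard := by
  have hdis : Disjoint E' F := Set.disjoint_left.mpr fun a ha hf => hdisj a hf ha
  calc E'.ncard + 2 < E'.ncard + F.ncard := by omega
    _ = (E' ∪ F).ncard := (Set.ncard_union_eq hdis (Set.toFinite _) (Set.toFinite _)).symm
    _ ≤ _ := Set.ncard_le_ncard (Set.union_subset hE' hF) (Set.toFinite _)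

private lemma sideGraph_ncard_le {V : Type} [Fintype V] (G : SimpleGraph V) (x y : V)
    (T : Set V) (e : Prop) (hx : x ∈ T) (hy : y ∈ T) (he : e → G.Adj x y) :
    (sideGraph G x y T e).edgeSet.ncard ≤
      {ed | ed ∈ G.edgeSet ∧ (∀ v ∈ ed, v ∈ T) ∧ (ed = s(x, y) → e)}.ncard + 2 := by
  classical
  set a₁ : Sym2 (Option ↥T) := s(none, some ⟨x, hx⟩) with ha₁
  set a₂ : Sym2 (Option ↥T) := s(none, some ⟨y, hy⟩) with ha₂
  set E := (sideGraph G x y T e).edgeSet with hE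
  set A := E \ {a₁, a₂} with hA
  set f : Option ↥T → V := fun o => o.elim x Subtype.val with hf
  have hcases : ∀ ed ∈ A, ∃ a b : ↥T, ed = s(some a, some b) ∧
      (sideGraph G x y T e).Adj (some a) (some b) := by
    intro ed hed
    obtain ⟨hedE, hne⟩ := hed
    revert hedE hne
    induction ed using Sym2.ind with
    | _ p q =>
      intro hedE hne
      match p, q with
      | none, none => exact (hedE : False).elim
      | none, some v =>
        exfalso
        apply hne
        rcases (hedE : v.1 = x ∨ v.1 = y) with h | h
        · exact Or.inl (by rw [ha₁, show v = ⟨x, hx⟩ from Subtype.ext h])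
        · exact Or.inr (by rw [Set.mem_singleton_iff, ha₂, show v = ⟨y, hy⟩ from Subtype.ext h])
      | some v, none =>
        exfalso
        apply hne
        rcases (hedE : v.1 = x ∨ v.1 = y) with h | h
        · exact Or.inl (by rw [ha₁, show v = ⟨x, hx⟩ from Subtype.ext h, Sym2.eq_swap])
        · exact Or.inr (by rw [Set.mem_singleton_iff, ha₂, show v = ⟨y, hy⟩ from Subtype.ext h, Sym2.eq_swap])
      | some u, some v => exact ⟨u, v, rfl, hedE⟩
  have hinj : Set.InjOn (Sym2.map f) A := by
    intro e1 he1 e2 he2 heq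
    obtain ⟨a, b, rfl, -⟩ := hcases e1 he1
    obtain ⟨c, d, rfl, -⟩ := hcases e2 he2
    rw [Sym2.map_pair_eq, Sym2.map_pair_eq] at heq
    have heq' : s(a.1, b.1) = s(c.1, d.1) := heq
    rcases Sym2.eq_iff.1 heq' with ⟨h1, h2⟩ | ⟨h1, h2⟩
    · rw [Subtype.ext h1, Subtype.ext h2]
    · rw [Subtype.ext h1, Subtype.ext h2, Sym2.eq_swap]
  have hsub : Sym2.map f '' A ⊆ {ed | ed ∈ G.edgeSet ∧ (∀ v ∈ ed, v ∈ T) ∧ (ed = s(x, y) → e)} := by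
    rintro m ⟨ed, hed, rfl⟩
    obtain ⟨a, b, rfl, hadj⟩ := hcases ed hed
    rw [Sym2.map_pair_eq]
    have hfa : f (some a) = a.1 := rfl
    have hfb : f (some b) = b.1 := rfl
    rw [hfa, hfb]
    rcases hadj with ⟨h1, h2⟩ | ⟨h1, h2, h3⟩
    · refine ⟨h1, ?_, fun hc => absurd hc h2⟩
      intro v hv
      rcases Sym2.mem_iff.1 hv with rfl | rfl
      exacts [a.2, b.2]
    · refine ⟨?_, ?_, fun _ => h1⟩
      · rcases Sym2.eq_iff.1 h3 with ⟨h4, h5⟩ | ⟨h4, h5⟩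
        · rw [h4, h5]; exact he h1
        · rw [h4, h5]; exact (he h1).symm
      · intro v hv
        rcases Sym2.mem_iff.1 hv with rfl | rfl
        exacts [a.2, b.2]
  calc E.ncard ≤ A.ncard + ({a₁, a₂} : Set _).ncard :=
        Set.ncard_le_ncard_diff_add_ncard _ _ (Set.toFinite _)
    _ ≤ A.ncard + 2 := by
        have : ({a₁, a₂} : Set (Sym2 (Option ↥T))).ncard ≤ 2 := by
          apply (Set.ncard_insert_le _ _).trans
          simp [Set.ncard_singleton]
        omega
    _ = (Sym2.map f '' A).ncard + 2 := by rw [Set.ncard_image_of_injOn hinj]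
    _ ≤ _ := by
        have := Set.ncard_le_ncard hsub (Set.toFinite _)
        omega
private lemma exists_adj_aux {V : Type} (G : SimpleGraph V) (W : Set V) (s t : V)
    (hts : t ≠ s) (hmem : ∀ u, u ≠ s → u ≠ t → u ∈ W) (htW : t ∉ W) :
    ∀ (a bb : ↥{u : V | u ≠ s}) (_ : (G.induce {u : V | u ≠ s}).Walk a bb) (_ : bb.1 = t)
      (ha : a.1 ∈ W),
      ∃ v : ↥W, (G.induce W).Reachable v ⟨a.1, ha⟩ ∧ G.Adj v.1 t := by
  intro a bb p
  induction p with
  | nil => exact fun hbb ha => absurd ha (hbb ▸ htW)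
  | @cons a b _ h q ih =>
    intro hbb ha
    have hG : G.Adj a.1 b.1 := h
    by_cases hbt : (b.1 : V) = t
    · exact ⟨⟨a.1, ha⟩, Reachable.refl _, hbt ▸ hG⟩
    · have hbW : b.1 ∈ W := hmem b.1 b.2 hbt
      obtain ⟨v, hr, hadj⟩ := ih hbb hbW
      have hadj2 : (G.induce W).Adj ⟨b.1, hbW⟩ ⟨a.1, ha⟩ := hG.symm
      exact ⟨v, hr.trans hadj2.reachable, hadj⟩

private lemma exists_adj_comp {V : Type} (G : SimpleGraph V) (W : Set V) (s t : V)
    (hts : t ≠ s) (hconn : (G.induce {u : V | u ≠ s}).Connected)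
    (hmem : ∀ u, u ≠ s → u ≠ t → u ∈ W) (htW : t ∉ W) (w : ↥W) (hws : w.1 ≠ s) :
    ∃ v : ↥W, (G.induce W).Reachable v w ∧ G.Adj v.1 t := by
  obtain ⟨p⟩ := hconn.preconnected ⟨w.1, hws⟩ ⟨t, hts⟩
  obtain ⟨v, hr, hadj⟩ := exists_adj_aux G W s t hts hmem htW ⟨w.1, hws⟩ _ p rfl w.2
  exact ⟨v, hr, hadj⟩

private lemma exists_three_distinct {α : Type*} (h : 3 ≤ Nat.card α) :
    ∃ a b c : α, a ≠ b ∧ a ≠ c ∧ b ≠ c := by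
  have hfin : Finite α := (Nat.card_pos_iff.mp (by omega)).2
  letI := Fintype.ofFinite α
  rw [Nat.card_eq_fintype_card] at h
  have h' : 2 < (Finset.univ : Finset α).card := by rwa [Finset.card_univ]
  obtain ⟨a, b, c, -, -, -, hab, hac, hbc⟩ := Finset.two_lt_card_iff.mp h'
  exact ⟨a, b, c, hab, hac, hbc⟩
private lemma IsTwoSumOf.swap {V V₁ V₂ : Type*} {G : SimpleGraph V} {G₁ : SimpleGraph V₁}
    {G₂ : SimpleGraph V₂} {j₁ j₂ : V} (h : IsTwoSumOf G G₁ G₂ j₁ j₂) :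
    IsTwoSumOf G G₂ G₁ j₁ j₂ := by
  obtain ⟨z₁, x₁, y₁, z₂, x₂, y₂, f₁, f₂, h1, h2, h3, h4, h5, h6, h7, h8, h9, h10,
    h11, h12, h13, h14, h15, h16⟩ := h
  exact ⟨z₂, x₂, y₂, z₁, x₁, y₁, f₂, f₁, h2, h1, h4, h3, h6, h5, h9, h10, h7, h8,
    fun v => (h11 v).elim Or.inr Or.inl,
    (Set.inter_comm _ _).trans h12, h14, h13, h15.trans or_comm,
    fun a b hab => (h16 a b hab).symm⟩

private lemma IsTwoSumOf.comapLeft {V V₁ V₂ V₁' : Type*} {G : SimpleGraph V}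
    {G₁ : SimpleGraph V₁} {G₂ : SimpleGraph V₂} {j₁ j₂ : V} (φ : V₁' ≃ V₁)
    (h : IsTwoSumOf G G₁ G₂ j₁ j₂) : IsTwoSumOf G (G₁.comap φ) G₂ j₁ j₂ := by
  obtain ⟨z₁, x₁, y₁, z₂, x₂, y₂, f₁, f₂, h1, h2, h3, h4, h5, h6, h7, h8, h9, h10,
    h11, h12, h13, h14, h15, h16⟩ := h
  have hmem : ∀ u : V₁', u ≠ φ.symm z₁ → φ u ≠ z₁ := by
    intro u hu hc
    exact hu ((Equiv.symm_apply_apply φ u).symm.trans (congrArg φ.symm hc))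
  have hset : φ '' {u | u ≠ φ.symm z₁} = {u | u ≠ z₁} := by
    ext w
    simp only [Set.mem_image, Set.mem_setOf_eq]
    constructor
    · rintro ⟨u, hu, rfl⟩
      exact hmem u hu
    · intro hw
      refine ⟨φ.symm w, fun hc => hw ?_, Equiv.apply_symm_apply φ w⟩
      rw [← Equiv.apply_symm_apply φ w, hc, Equiv.apply_symm_apply]
  have himg : (f₁ ∘ φ) '' {u | u ≠ φ.symm z₁} = f₁ '' {u | u ≠ z₁} := by
    rw [Set.image_comp, hset]
  refine ⟨φ.symm z₁, φ.symm x₁, φ.symm y₁, z₂, x₂, y₂, f₁ ∘ φ, f₂,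
    fun hc => h1 (φ.symm.injective hc), h2, ?_, h4, ?_, h6, ?_, ?_, h9, h10, ?_, ?_, ?_, h14, ?_, ?_⟩
  · intro u
    rw [comap_adj, Equiv.apply_symm_apply, h3, Equiv.eq_symm_apply, Equiv.eq_symm_apply]
  · intro a ha b hb heq
    exact φ.injective (h5 (hmem a ha) (hmem b hb) heq)
  · show f₁ (φ (φ.symm x₁)) = j₁
    rw [Equiv.apply_symm_apply]; exact h7
  · show f₁ (φ (φ.symm y₁)) = j₂
    rw [Equiv.apply_symm_apply]; exact h8
  · intro v
    rw [himg]; exact h11 v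
  · rw [himg]; exact h12
  · intro u v hu hv hs
    have hs' : s(φ u, φ v) ≠ s(x₁, y₁) := by
      intro hc
      apply hs
      rcases Sym2.eq_iff.1 hc with ⟨e1, e2⟩ | ⟨e1, e2⟩
      · rw [(Equiv.eq_symm_apply φ).2 e1, (Equiv.eq_symm_apply φ).2 e2]
      · rw [(Equiv.eq_symm_apply φ).2 e1, (Equiv.eq_symm_apply φ).2 e2, Sym2.eq_swap]
    exact h13 (φ u) (φ v) (hmem u hu) (hmem v hv) hs'
  · rw [comap_adj, Equiv.apply_symm_apply, Equiv.apply_symm_apply]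
    exact h15
  · intro a b hab
    rw [himg]
    exact h16 a b hab

private lemma comap_edge_ncard {α β : Type*} (φ : α ≃ β) (G : SimpleGraph β) :
    (G.comap φ).edgeSet.ncard = G.edgeSet.ncard := by
  have iso : G.comap ⇑φ ≃g G := ⟨φ, Iff.rfl⟩
  rw [← Nat.card_coe_set_eq, ← Nat.card_coe_set_eq]
  exact Nat.card_congr iso.mapEdgeSet
private lemma sideGraph_image {V : Type} (x : V) (T : Set V) :
    (fun o : Option ↥T => o.elim x Subtype.val) '' {u | u ≠ none} = T := by
  ext w
  constructor
  · rintro ⟨u, hu, rfl⟩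
    match u with
    | none => exact absurd rfl hu
    | some v => exact v.2
  · intro hw
    exact ⟨some ⟨w, hw⟩, by simp, rfl⟩

private lemma sideGraph_isTwoSumOf {V : Type} (G : SimpleGraph V) (x y : V) (hxy : x ≠ y)
    (S : Set V) (hxS : x ∉ S) (hyS : y ∉ S)
    (hsep : ∀ a ∈ S, ∀ b, G.Adj a b → b ∈ S ∨ b = x ∨ b = y) :
    IsTwoSumOf G (sideGraph G x y (S ∪ {x, y}) (G.Adj x y)) (sideGraph G x y Sᶜ False) x y := by
  have hx1 : x ∈ S ∪ {x, y} := by simp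
  have hy1 : y ∈ S ∪ {x, y} := by simp
  have hx2 : x ∈ Sᶜ := hxS
  have hy2 : y ∈ Sᶜ := hyS
  refine ⟨none, some ⟨x, hx1⟩, some ⟨y, hy1⟩, none, some ⟨x, hx2⟩, some ⟨y, hy2⟩,
    (fun o => o.elim x Subtype.val), (fun o => o.elim x Subtype.val),
    by simp [hxy], by simp [hxy], ?_, ?_, ?_, ?_, rfl, rfl, rfl, rfl, ?_, ?_, ?_, ?_, ?_, ?_⟩
  · rintro (_|v)
    · simp [sideGraph]
    · rw [sideGraph_adj_none]
      simp [Subtype.ext_iff]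
  · rintro (_|v)
    · simp [sideGraph]
    · rw [sideGraph_adj_none]
      simp [Subtype.ext_iff]
  · rintro (_|a) ha (_|b) hb heq
    · rfl
    · exact absurd rfl ha
    · exact absurd rfl hb
    · exact congrArg some (Subtype.ext heq)
  · rintro (_|a) ha (_|b) hb heq
    · rfl
    · exact absurd rfl ha
    · exact absurd rfl hb
    · exact congrArg some (Subtype.ext heq)
  · intro v
    rw [Set.mem_union, sideGraph_image, sideGraph_image]
    by_cases hv : v ∈ S ∪ {x, y}
    · exact Or.inl hv
    · exact Or.inr fun hvS => hv (Or.inl hvS)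
  · rw [sideGraph_image, sideGraph_image]
    ext v
    constructor
    · rintro ⟨hv1, hv2⟩
      rcases hv1 with hv1 | hv1
      · exact absurd hv1 hv2
      · exact hv1
    · rintro (rfl | rfl)
      · exact ⟨hx1, hx2⟩
      · exact ⟨hy1, hy2⟩
  · rintro (_|a) (_|b) ha hb hs
    · exact absurd rfl ha
    · exact absurd rfl ha
    · exact absurd rfl hb
    · have hne : s(a.1, b.1) ≠ s(x, y) := by
        intro hc
        apply hs
        rcases Sym2.eq_iff.1 hc with ⟨e1, e2⟩ | ⟨e1, e2⟩
        · rw [show a = ⟨x, hx1⟩ from Subtype.ext e1, show b = ⟨y, hy1⟩ from Subtype.ext e2]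
        · rw [show a = ⟨y, hy1⟩ from Subtype.ext e1, show b = ⟨x, hx1⟩ from Subtype.ext e2,
            Sym2.eq_swap]
      rw [sideGraph_adj_some]
      constructor
      · intro h
        exact Or.inl ⟨h, hne⟩
      · rintro (⟨h, -⟩ | ⟨-, -, h⟩)
        · exact h
        · exact absurd h hne
  · rintro (_|a) (_|b) ha hb hs
    · exact absurd rfl ha
    · exact absurd rfl ha
    · exact absurd rfl hb
    · have hne : s(a.1, b.1) ≠ s(x, y) := by
        intro hc
        apply hs
        rcases Sym2.eq_iff.1 hc with ⟨e1, e2⟩ | ⟨e1, e2⟩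
        · rw [show a = ⟨x, hx2⟩ from Subtype.ext e1, show b = ⟨y, hy2⟩ from Subtype.ext e2]
        · rw [show a = ⟨y, hy2⟩ from Subtype.ext e1, show b = ⟨x, hx2⟩ from Subtype.ext e2,
            Sym2.eq_swap]
      rw [sideGraph_adj_some]
      constructor
      · intro h
        exact Or.inl ⟨h, hne⟩
      · rintro (⟨h, -⟩ | ⟨hf, -, -⟩)
        · exact h
        · exact hf.elim
  · rw [sideGraph_adj_some, sideGraph_adj_some]
    constructor
    · intro h
      exact Or.inl (Or.inr ⟨h, hxy, rfl⟩)
    · rintro ((⟨h, -⟩ | ⟨h, -, -⟩) | (⟨h, -⟩ | ⟨hf, -, -⟩))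
      · exact h
      · exact h
      · exact h
      · exact hf.elim
  · intro a b hab
    rw [sideGraph_image, sideGraph_image]
    by_cases ha : a ∈ S
    · refine Or.inl ⟨Or.inl ha, ?_⟩
      rcases hsep a ha b hab with hb | rfl | rfl
      · exact Or.inl hb
      · exact hx1
      · exact hy1
    · by_cases hb : b ∈ S
      · refine Or.inl ⟨?_, Or.inl hb⟩
        rcases hsep b hb a hab.symm with ha' | rfl | rfl
        · exact Or.inl ha'
        · exact hx1
        · exact hy1
      · exact Or.inr ⟨ha, hb⟩

private lemma admissible_of_separated {V : Type} [Fintype V] (G : SimpleGraph V) (x y : V)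
    (hxy : x ≠ y) (S : Set V) (hxS : x ∉ S) (hyS : y ∉ S)
    (hsep : ∀ a ∈ S, ∀ b, G.Adj a b → b ∈ S ∨ b = x ∨ b = y)
    (F₁ F₂ : Set (Sym2 V))
    (hF₁E : F₁ ⊆ G.edgeSet) (hF₂E : F₂ ⊆ G.edgeSet)
    (hF₁c : 3 ≤ F₁.ncard) (hF₂c : 3 ≤ F₂.ncard)
    (hF₁ : ∀ ed ∈ F₁, ∃ v, v ∈ ed ∧ v ∉ S ∧ v ≠ x ∧ v ≠ y)
    (hF₂ : ∀ ed ∈ F₂, (∃ v, v ∈ ed ∧ v ∈ S) ∨ ed = s(x, y)) :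
    AdmissibleTwoCut G x y := by
  classical
  have hx1 : x ∈ S ∪ {x, y} := by simp
  have hy1 : y ∈ S ∪ {x, y} := by simp
  have hx2 : x ∈ Sᶜ := hxS
  have hy2 : y ∈ Sᶜ := hyS
  have hts := sideGraph_isTwoSumOf G x y hxy S hxS hyS hsep
  let φ₁ := Finite.equivFin (Option ↥(S ∪ {x, y}))
  let φ₂ := Finite.equivFin (Option ↥(Sᶜ : Set V))
  refine ⟨_, _, (sideGraph G x y (S ∪ {x, y}) (G.Adj x y)).comap φ₁.symm,
    (sideGraph G x y Sᶜ False).comap φ₂.symm, ?_, ?_, ?_⟩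
  · exact (((hts.comapLeft φ₁.symm).swap.comapLeft φ₂.symm).swap)
  · rw [comap_edge_ncard]
    refine lt_of_le_of_lt (sideGraph_ncard_le G x y _ _ hx1 hy1 id) ?_
    refine ncard_lt_of_witness G _ F₁ (fun ed hed => hed.1) hF₁E ?_ hF₁c
    rintro ed hf ⟨hmem, hall, -⟩
    obtain ⟨v, hv, hvS, hvx, hvy⟩ := hF₁ ed hf
    rcases hall v hv with h | h
    · exact hvS h
    · rcases h with rfl | rfl
      · exact hvx rfl
      · exact hvy rfl
  · rw [comap_edge_ncard]
    refine lt_of_le_of_lt (sideGraph_ncard_le G x y _ _ hx2 hy2 False.elim) ?_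
    refine ncard_lt_of_witness G _ F₂ (fun ed hed => hed.1) hF₂E ?_ hF₂c
    rintro ed hf ⟨hmem, hall, hlast⟩
    rcases hF₂ ed hf with ⟨v, hv, hvS⟩ | rfl
    · exact (hall v hv) hvS
    · exact hlast rfl


/-- If `G` is 2-connected, `G - {x,y}` has at least 3 components, and `{x,y}` is
not an admissible 2-cut, then `G ≅ K_{2,3}`. -/
theorem isoK23_of_not_admissible {V : Type} [Fintype V] (G : SimpleGraph V)
    (x y : V) (hxy : x ≠ y) (h2 : TwoConnected G)
    (hc : 3 ≤ Nat.card ((G.induce {v : V | v ≠ x ∧ v ≠ y}).ConnectedComponent))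
    (hna : ¬ AdmissibleTwoCut G x y) :
    Nonempty (G ≃g completeBipartiteGraph (Fin 2) (Fin 3)) := by
  classical
  set W : Set V := {v : V | v ≠ x ∧ v ≠ y} with hWdef
  have hxW : x ∉ W := fun h => h.1 rfl
  have hyW : y ∉ W := fun h => h.2 rfl
  have symne : ∀ {a b c d : V}, (a = c → b = d → False) → (a = d → b = c → False) →
      s(a, b) ≠ s(c, d) := by
    intro a b c d h1 h2 hcon
    rcases Sym2.eq_iff.1 hcon with ⟨e1, e2⟩ | ⟨e1, e2⟩
    exacts [h1 e1 e2, h2 e1 e2]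
  have getx : ∀ w : ↥W, ∃ v : ↥W,
      (G.induce W).connectedComponentMk v = (G.induce W).connectedComponentMk w ∧
        G.Adj v.1 x := by
    intro w
    obtain ⟨v, hr, hadj⟩ := exists_adj_comp G W y x hxy (h2.2 y)
      (fun u hu1 hu2 => ⟨hu2, hu1⟩) hxW w w.2.2
    exact ⟨v, ConnectedComponent.sound hr, hadj⟩
  have gety : ∀ w : ↥W, ∃ v : ↥W,
      (G.induce W).connectedComponentMk v = (G.induce W).connectedComponentMk w ∧
        G.Adj v.1 y := by
    intro w
    obtain ⟨v, hr, hadj⟩ := exists_adj_comp G W x y hxy.symm (h2.2 x)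
      (fun u hu1 hu2 => ⟨hu1, hu2⟩) hyW w w.2.1
    exact ⟨v, ConnectedComponent.sound hr, hadj⟩
  obtain ⟨c₁, c₂, c₃, h12, h13, h23⟩ := exists_three_distinct hc
  obtain ⟨w₁, hw₁'⟩ := Quot.exists_rep c₁
  obtain ⟨w₂, hw₂'⟩ := Quot.exists_rep c₂
  obtain ⟨w₃, hw₃'⟩ := Quot.exists_rep c₃
  have hw₁ : (G.induce W).connectedComponentMk w₁ = c₁ := hw₁'
  have hw₂ : (G.induce W).connectedComponentMk w₂ = c₂ := hw₂'
  have hw₃ : (G.induce W).connectedComponentMk w₃ = c₃ := hw₃'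
  set compSet : (G.induce W).ConnectedComponent → Set V :=
    fun c => {u : V | ∃ h : u ∈ W, (G.induce W).connectedComponentMk ⟨u, h⟩ = c}
    with hcompSet
  have hxC : ∀ c, x ∉ compSet c := by
    rintro c ⟨h, -⟩
    exact hxW h
  have hyC : ∀ c, y ∉ compSet c := by
    rintro c ⟨h, -⟩
    exact hyW h
  have hsepC : ∀ c, ∀ a ∈ compSet c, ∀ b, G.Adj a b → b ∈ compSet c ∨ b = x ∨ b = y := by
    rintro c a ⟨haW, hac⟩ b hab
    by_cases hbx : b = x
    · exact Or.inr (Or.inl hbx)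
    by_cases hby : b = y
    · exact Or.inr (Or.inr hby)
    have hbW : b ∈ W := ⟨hbx, hby⟩
    have hadj : (G.induce W).Adj ⟨a, haW⟩ ⟨b, hbW⟩ := hab
    exact Or.inl ⟨hbW, (ConnectedComponent.sound hadj.symm.reachable).trans hac⟩
  have hdiffC : ∀ c c' : (G.induce W).ConnectedComponent, c ≠ c' →
      ∀ u, u ∈ compSet c → u ∉ compSet c' := by
    rintro c c' hcc u ⟨hu1, e1⟩ ⟨hu2, e2⟩
    exact hcc (e1.symm.trans e2)
  have getxC : ∀ (c) (w : ↥W), (G.induce W).connectedComponentMk w = c →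
      ∃ a, a ∈ compSet c ∧ a ∈ W ∧ G.Adj a x := by
    intro c w hw
    obtain ⟨v, hmk, hadj⟩ := getx w
    exact ⟨v.1, ⟨v.2, hmk.trans hw⟩, v.2, hadj⟩
  have getyC : ∀ (c) (w : ↥W), (G.induce W).connectedComponentMk w = c →
      ∃ a, a ∈ compSet c ∧ a ∈ W ∧ G.Adj a y := by
    intro c w hw
    obtain ⟨v, hmk, hadj⟩ := gety w
    exact ⟨v.1, ⟨v.2, hmk.trans hw⟩, v.2, hadj⟩
  by_cases hxyE : G.Adj x y
  · -- Case A: x and y adjacent; always admissible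
    exfalso
    apply hna
    obtain ⟨a₁, ha₁S, ha₁W, ha₁⟩ := getxC c₁ w₁ hw₁
    obtain ⟨b₁, hb₁S, hb₁W, hb₁⟩ := getyC c₁ w₁ hw₁
    obtain ⟨a₂, ha₂S, ha₂W, ha₂⟩ := getxC c₂ w₂ hw₂
    obtain ⟨b₂, hb₂S, hb₂W, hb₂⟩ := getyC c₂ w₂ hw₂
    obtain ⟨a₃, ha₃S, ha₃W, ha₃⟩ := getxC c₃ w₃ hw₃
    have ha23 : a₂ ≠ a₃ := fun h => hdiffC c₂ c₃ h23 a₂ ha₂S (h ▸ ha₃S)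
    refine admissible_of_separated G x y hxy (compSet c₁) (hxC c₁) (hyC c₁) (hsepC c₁)
      {s(a₂, x), s(b₂, y), s(a₃, x)} {s(a₁, x), s(b₁, y), s(x, y)} ?_ ?_ ?_ ?_ ?_ ?_
    · rintro ed hed
      simp only [Set.mem_insert_iff, Set.mem_singleton_iff] at hed
      rcases hed with rfl | rfl | rfl
      exacts [G.mem_edgeSet.2 ha₂, G.mem_edgeSet.2 hb₂, G.mem_edgeSet.2 ha₃]
    · rintro ed hed
      simp only [Set.mem_insert_iff, Set.mem_singleton_iff] at hed
      rcases hed with rfl | rfl | rfl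
      exacts [G.mem_edgeSet.2 ha₁, G.mem_edgeSet.2 hb₁, G.mem_edgeSet.2 hxyE]
    · exact three_le_ncard _ _ _
        (symne (fun e1 e2 => hxy e2) (fun e1 e2 => ha₂W.2 e1))
        (symne (fun e1 e2 => ha23 e1) (fun e1 e2 => ha₂W.1 e1))
        (symne (fun e1 e2 => hxy e2.symm) (fun e1 e2 => hb₂W.1 e1))
    · exact three_le_ncard _ _ _
        (symne (fun e1 e2 => hxy e2) (fun e1 e2 => ha₁W.2 e1))
        (symne (fun e1 e2 => hxy e2) (fun e1 e2 => ha₁W.2 e1))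
        (symne (fun e1 e2 => hb₁W.1 e1) (fun e1 e2 => hb₁W.2 e1))
    · rintro ed hed
      simp only [Set.mem_insert_iff, Set.mem_singleton_iff] at hed
      rcases hed with rfl | rfl | rfl
      · exact ⟨a₂, Sym2.mem_iff.2 (Or.inl rfl), hdiffC c₂ c₁ h12.symm a₂ ha₂S, ha₂W.1, ha₂W.2⟩
      · exact ⟨b₂, Sym2.mem_iff.2 (Or.inl rfl), hdiffC c₂ c₁ h12.symm b₂ hb₂S, hb₂W.1, hb₂W.2⟩
      · exact ⟨a₃, Sym2.mem_iff.2 (Or.inl rfl), hdiffC c₃ c₁ h13.symm a₃ ha₃S, ha₃W.1, ha₃W.2⟩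
    · rintro ed hed
      simp only [Set.mem_insert_iff, Set.mem_singleton_iff] at hed
      rcases hed with rfl | rfl | rfl
      · exact Or.inl ⟨a₁, Sym2.mem_iff.2 (Or.inl rfl), ha₁S⟩
      · exact Or.inl ⟨b₁, Sym2.mem_iff.2 (Or.inl rfl), hb₁S⟩
      · exact Or.inr rfl
  by_cases hInt : ∃ u v : V, u ∈ W ∧ v ∈ W ∧ G.Adj u v
  · -- Case B: some component contains an internal edge
    exfalso
    apply hna
    obtain ⟨u, v0, huW, hv0W, huv⟩ := hInt
    set c : (G.induce W).ConnectedComponent := (G.induce W).connectedComponentMk ⟨u, huW⟩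
      with hcdef
    have hex2 : ∃ d d' : (G.induce W).ConnectedComponent, d ≠ d' ∧ d ≠ c ∧ d' ≠ c := by
      by_cases hc1 : c₁ = c
      · exact ⟨c₂, c₃, h23, by rw [← hc1]; exact h12.symm, by rw [← hc1]; exact h13.symm⟩
      by_cases hc2 : c₂ = c
      · exact ⟨c₁, c₃, h13, hc1, by rw [← hc2]; exact h23.symm⟩
      · exact ⟨c₁, c₂, h12, hc1, hc2⟩
    obtain ⟨d, d', hdd, hdc, hd'c⟩ := hex2
    obtain ⟨wd, hwd'⟩ := Quot.exists_rep d
    obtain ⟨wd', hwd''⟩ := Quot.exists_rep d'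
    have hwd : (G.induce W).connectedComponentMk wd = d := hwd'
    have hwdd : (G.induce W).connectedComponentMk wd' = d' := hwd''
    obtain ⟨ad, hadS, hadW, had⟩ := getxC d wd hwd
    obtain ⟨bd, hbdS, hbdW, hbd⟩ := getyC d wd hwd
    obtain ⟨ad', had'S, had'W, had'⟩ := getxC d' wd' hwdd
    obtain ⟨a, haS, haW, ha⟩ := getxC c ⟨u, huW⟩ rfl
    obtain ⟨b, hbS, hbW, hb⟩ := getyC c ⟨u, huW⟩ rfl
    have hadad' : ad ≠ ad' := fun h => hdiffC d d' hdd ad hadS (h ▸ had'S)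
    refine admissible_of_separated G x y hxy (compSet c) (hxC c) (hyC c) (hsepC c)
      {s(ad, x), s(bd, y), s(ad', x)} {s(u, v0), s(a, x), s(b, y)} ?_ ?_ ?_ ?_ ?_ ?_
    · rintro ed hed
      simp only [Set.mem_insert_iff, Set.mem_singleton_iff] at hed
      rcases hed with rfl | rfl | rfl
      exacts [G.mem_edgeSet.2 had, G.mem_edgeSet.2 hbd, G.mem_edgeSet.2 had']
    · rintro ed hed
      simp only [Set.mem_insert_iff, Set.mem_singleton_iff] at hed
      rcases hed with rfl | rfl | rfl
      exacts [G.mem_edgeSet.2 huv, G.mem_edgeSet.2 ha, G.mem_edgeSet.2 hb]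
    · exact three_le_ncard _ _ _
        (symne (fun e1 e2 => hxy e2) (fun e1 e2 => hadW.2 e1))
        (symne (fun e1 e2 => hadad' e1) (fun e1 e2 => hadW.1 e1))
        (symne (fun e1 e2 => hxy e2.symm) (fun e1 e2 => hbdW.1 e1))
    · exact three_le_ncard _ _ _
        (symne (fun e1 e2 => hv0W.1 e2) (fun e1 e2 => huW.1 e1))
        (symne (fun e1 e2 => hv0W.2 e2) (fun e1 e2 => huW.2 e1))
        (symne (fun e1 e2 => hxy e2) (fun e1 e2 => haW.2 e1))
    · rintro ed hed
      simp only [Set.mem_insert_iff, Set.mem_singleton_iff] at hed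
      rcases hed with rfl | rfl | rfl
      · exact ⟨ad, Sym2.mem_iff.2 (Or.inl rfl), hdiffC d c hdc ad hadS, hadW.1, hadW.2⟩
      · exact ⟨bd, Sym2.mem_iff.2 (Or.inl rfl), hdiffC d c hdc bd hbdS, hbdW.1, hbdW.2⟩
      · exact ⟨ad', Sym2.mem_iff.2 (Or.inl rfl), hdiffC d' c hd'c ad' had'S, had'W.1, had'W.2⟩
    · rintro ed hed
      simp only [Set.mem_insert_iff, Set.mem_singleton_iff] at hed
      rcases hed with rfl | rfl | rfl
      · exact Or.inl ⟨u, Sym2.mem_iff.2 (Or.inl rfl), ⟨huW, rfl⟩⟩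
      · exact Or.inl ⟨a, Sym2.mem_iff.2 (Or.inl rfl), haS⟩
      · exact Or.inl ⟨b, Sym2.mem_iff.2 (Or.inl rfl), hbS⟩
  -- Now: no edge xy, and no edges inside W
  have hP : ∀ u, u ∈ W → ∀ b, G.Adj u b → b = x ∨ b = y := by
    intro u hu b hab
    by_cases hbx : b = x
    · exact Or.inl hbx
    by_cases hby : b = y
    · exact Or.inr hby
    exact absurd ⟨u, b, hu, ⟨hbx, hby⟩, hab⟩ hInt
  have hsing : ∀ a b : ↥W, (G.induce W).Reachable a b → a = b := by
    intro a b hr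
    obtain ⟨p⟩ := hr
    cases p with
    | nil => rfl
    | @cons _ m _ h q =>
      exact absurd ⟨a.1, m.1, a.2, m.2, h⟩ hInt
  have hPadj : ∀ u, u ∈ W → G.Adj x u ∧ G.Adj y u := by
    intro u hu
    obtain ⟨v, hmk, hadj⟩ := getx ⟨u, hu⟩
    obtain ⟨v', hmk', hadj'⟩ := gety ⟨u, hu⟩
    have hv := hsing v ⟨u, hu⟩ (ConnectedComponent.exact hmk)
    have hv' := hsing v' ⟨u, hu⟩ (ConnectedComponent.exact hmk')
    rw [hv] at hadj
    rw [hv'] at hadj'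
    exact ⟨hadj.symm, hadj'.symm⟩
  have hv12 : w₁.1 ≠ w₂.1 := by
    intro h
    apply h12
    rw [← hw₁, ← hw₂, Subtype.ext h]
  have hv13 : w₁.1 ≠ w₃.1 := by
    intro h
    apply h13
    rw [← hw₁, ← hw₃, Subtype.ext h]
  have hv23 : w₂.1 ≠ w₃.1 := by
    intro h
    apply h23
    rw [← hw₂, ← hw₃, Subtype.ext h]
  by_cases h4 : ∃ v4, v4 ∈ W ∧ v4 ≠ w₁.1 ∧ v4 ≠ w₂.1 ∧ v4 ≠ w₃.1
  · -- Case C: at least four components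
    exfalso
    apply hna
    obtain ⟨v4, hv4W, hv41, hv42, hv43⟩ := h4
    refine admissible_of_separated G x y hxy {w₁.1, w₂.1} ?_ ?_ ?_
      {s(w₃.1, x), s(w₃.1, y), s(v4, x)} {s(w₁.1, x), s(w₁.1, y), s(w₂.1, x)} ?_ ?_ ?_ ?_ ?_ ?_
    · rintro (h | h)
      · exact w₁.2.1 h.symm
      · exact w₂.2.1 h.symm
    · rintro (h | h)
      · exact w₁.2.2 h.symm
      · exact w₂.2.2 h.symm
    · intro a ha b hab
      have haW : a ∈ W := by
        rcases ha with rfl | rfl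
        exacts [w₁.2, w₂.2]
      exact Or.inr (hP a haW b hab)
    · rintro ed hed
      simp only [Set.mem_insert_iff, Set.mem_singleton_iff] at hed
      rcases hed with rfl | rfl | rfl
      exacts [G.mem_edgeSet.2 (hPadj _ w₃.2).1.symm, G.mem_edgeSet.2 (hPadj _ w₃.2).2.symm,
        G.mem_edgeSet.2 (hPadj _ hv4W).1.symm]
    · rintro ed hed
      simp only [Set.mem_insert_iff, Set.mem_singleton_iff] at hed
      rcases hed with rfl | rfl | rfl
      exacts [G.mem_edgeSet.2 (hPadj _ w₁.2).1.symm, G.mem_edgeSet.2 (hPadj _ w₁.2).2.symm,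
        G.mem_edgeSet.2 (hPadj _ w₂.2).1.symm]
    · exact three_le_ncard _ _ _
        (symne (fun e1 e2 => hxy e2) (fun e1 e2 => w₃.2.2 e1))
        (symne (fun e1 e2 => hv43 e1.symm) (fun e1 e2 => w₃.2.1 e1))
        (symne (fun e1 e2 => hxy e2.symm) (fun e1 e2 => w₃.2.1 e1))
    · exact three_le_ncard _ _ _
        (symne (fun e1 e2 => hxy e2) (fun e1 e2 => w₁.2.2 e1))
        (symne (fun e1 e2 => hv12 e1) (fun e1 e2 => w₁.2.1 e1))
        (symne (fun e1 e2 => hxy e2.symm) (fun e1 e2 => w₁.2.1 e1))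
    · rintro ed hed
      simp only [Set.mem_insert_iff, Set.mem_singleton_iff] at hed
      have h3S : w₃.1 ∉ ({w₁.1, w₂.1} : Set V) := by
        rintro (h | h)
        exacts [hv13 h.symm, hv23 h.symm]
      have h4S : v4 ∉ ({w₁.1, w₂.1} : Set V) := by
        rintro (h | h)
        exacts [hv41 h, hv42 h]
      rcases hed with rfl | rfl | rfl
      · exact ⟨w₃.1, Sym2.mem_iff.2 (Or.inl rfl), h3S, w₃.2.1, w₃.2.2⟩
      · exact ⟨w₃.1, Sym2.mem_iff.2 (Or.inl rfl), h3S, w₃.2.1, w₃.2.2⟩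
      · exact ⟨v4, Sym2.mem_iff.2 (Or.inl rfl), h4S, hv4W.1, hv4W.2⟩
    · rintro ed hed
      simp only [Set.mem_insert_iff, Set.mem_singleton_iff] at hed
      rcases hed with rfl | rfl | rfl
      · exact Or.inl ⟨w₁.1, Sym2.mem_iff.2 (Or.inl rfl), Or.inl rfl⟩
      · exact Or.inl ⟨w₁.1, Sym2.mem_iff.2 (Or.inl rfl), Or.inl rfl⟩
      · exact Or.inl ⟨w₂.1, Sym2.mem_iff.2 (Or.inl rfl), Or.inr rfl⟩
  -- Final case: G is K_{2,3}
  have hcov : ∀ v : V, v = x ∨ v = y ∨ (v = w₁.1 ∨ v = w₂.1 ∨ v = w₃.1) := by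
    intro v
    by_cases hvx : v = x
    · exact Or.inl hvx
    by_cases hvy : v = y
    · exact Or.inr (Or.inl hvy)
    by_cases hv1 : v = w₁.1
    · exact Or.inr (Or.inr (Or.inl hv1))
    by_cases hv2 : v = w₂.1
    · exact Or.inr (Or.inr (Or.inr (Or.inl hv2)))
    by_cases hv3 : v = w₃.1
    · exact Or.inr (Or.inr (Or.inr (Or.inr hv3)))
    exact absurd ⟨v, ⟨hvx, hvy⟩, hv1, hv2, hv3⟩ h4
  have hxv : ∀ b, (b = w₁.1 ∨ b = w₂.1 ∨ b = w₃.1) → G.Adj x b ∧ G.Adj y b := by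
    rintro b (rfl | rfl | rfl)
    exacts [hPadj _ w₁.2, hPadj _ w₂.2, hPadj _ w₃.2]
  have hAdj : ∀ a b : V, G.Adj a b ↔
      ((a = x ∨ a = y) ∧ (b = w₁.1 ∨ b = w₂.1 ∨ b = w₃.1)) ∨
      ((a = w₁.1 ∨ a = w₂.1 ∨ a = w₃.1) ∧ (b = x ∨ b = y)) := by
    intro a b
    constructor
    · intro hab
      rcases hcov a with rfl | rfl | ha'
      · rcases hcov b with rfl | rfl | hb'
        · exact absurd hab (G.irrefl)
        · exact absurd hab hxyE
        · exact Or.inl ⟨Or.inl rfl, hb'⟩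
      · rcases hcov b with rfl | rfl | hb'
        · exact absurd hab.symm hxyE
        · exact absurd hab (G.irrefl)
        · exact Or.inl ⟨Or.inr rfl, hb'⟩
      · have haW : a ∈ W := by
          rcases ha' with rfl | rfl | rfl
          exacts [w₁.2, w₂.2, w₃.2]
        exact Or.inr ⟨ha', hP a haW b hab⟩
    · rintro (⟨ha, hb⟩ | ⟨ha, hb⟩)
      · rcases ha with rfl | rfl
        · exact (hxv b hb).1
        · exact (hxv b hb).2
      · rcases hb with rfl | rfl
        · exact ((hxv a ha).1).symm
        · exact ((hxv a ha).2).symm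
  have hv1x : w₁.1 ≠ x := w₁.2.1
  have hv1y : w₁.1 ≠ y := w₁.2.2
  have hv2x : w₂.1 ≠ x := w₂.2.1
  have hv2y : w₂.1 ≠ y := w₂.2.2
  have hv3x : w₃.1 ≠ x := w₃.2.1
  have hv3y : w₃.1 ≠ y := w₃.2.2
  refine ⟨Iso.symm ⟨⟨Sum.elim (![x, y]) (![w₁.1, w₂.1, w₃.1]),
    (fun v => if v = x then Sum.inl 0 else if v = y then Sum.inl 1
      else if v = w₁.1 then Sum.inr 0 else if v = w₂.1 then Sum.inr 1 else Sum.inr 2),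
    ?_, ?_⟩, ?_⟩⟩
  · rintro (i | i) <;> fin_cases i <;>
      simp [hxy, hxy.symm, hv1x, hv1y, hv2x, hv2y, hv3x, hv3y, hv12, hv13, hv23,
        hv12.symm, hv13.symm, hv23.symm]
  · intro v
    rcases hcov v with rfl | rfl | rfl | rfl | rfl <;>
      simp [hxy, hxy.symm, hv1x, hv1y, hv2x, hv2y, hv3x, hv3y, hv12, hv13, hv23,
        hv12.symm, hv13.symm, hv23.symm]
  · intro a b
    rw [hAdj]
    rcases a with i | i <;> rcases b with j | j <;> fin_cases i <;> fin_cases j <;>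
      simp [completeBipartiteGraph, hxy, hxy.symm, hv1x, hv1y, hv2x, hv2y, hv3x, hv3y,
        hv12, hv13, hv23, hv12.symm, hv13.symm, hv23.symm, hv1x.symm, hv1y.symm,
        hv2x.symm, hv2y.symm, hv3x.symm, hv3y.symm]
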